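/- The generators of Γ₃ pair the sides of the 24-cell according to the side-pairing of the manifold 24c1.3: g₁s₁ = −s₅, g₂s₂ = −s₁₃, g₃s₃ = −s₁₆, g₄s₄ = −s₈, g₆s₆ = −s₂₁, g₇s₇ = −s₂₃, g₉s₉ = −s₁₈, g₁₀s₁₀ = −s₂₀, g₁₁s₁₁ = −s₂₄, g₁₂s₁₂ = −s₁₉, g₁₄s₁₄ = −s₁₅, g₁₇s₁₇ = −s₂₂ (each gᵢ maps the outward normal of side Sᵢ to the inward normal of its paired side). -/
import Mathlib


open Matrix

noncomputable def s : Fin 24 → Fin 5 → ℝ :=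
  ![![1, 1, 0, 0, 1],
    ![-1, 1, 0, 0, 1],
    ![1, -1, 0, 0, 1],
    ![-1, -1, 0, 0, 1],
    ![1, 0, 1, 0, 1],
    ![-1, 0, 1, 0, 1],
    ![1, 0, -1, 0, 1],
    ![-1, 0, -1, 0, 1],
    ![0, 1, 1, 0, 1],
    ![0, -1, 1, 0, 1],
    ![0, 1, -1, 0, 1],
    ![0, -1, -1, 0, 1],
    ![1, 0, 0, 1, 1],
    ![-1, 0, 0, 1, 1],
    ![1, 0, 0, -1, 1],
    ![-1, 0, 0, -1, 1],
    ![0, 1, 0, 1, 1],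
    ![0, -1, 0, 1, 1],
    ![0, 1, 0, -1, 1],
    ![0, -1, 0, -1, 1],
    ![0, 0, 1, 1, 1],
    ![0, 0, -1, 1, 1],
    ![0, 0, 1, -1, 1],
    ![0, 0, -1, -1, 1]]

noncomputable def g1 : Matrix (Fin 5) (Fin 5) ℝ :=
  (1/2 : ℝ) • !![-3, -3, -1, -1, 4; -1, 1, -1, 1, 0; -3, -3, 1, 1, 4; 1, -1, -1, 1, 0; -4, -4, 0, 0, 6]

noncomputable def g2 : Matrix (Fin 5) (Fin 5) ℝ :=
  (1/2 : ℝ) • !![3, -3, 1, 1, 4; -1, -1, 1, -1, 0; -1, -1, -1, 1, 0; 3, -3, -1, -1, 4; 4, -4, 0, 0, 6]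

noncomputable def g3 : Matrix (Fin 5) (Fin 5) ℝ :=
  (1/2 : ℝ) • !![3, -3, -1, 1, -4; 1, 1, -1, -1, 0; 1, 1, 1, 1, 0; 3, -3, 1, -1, -4; -4, 4, 0, 0, 6]

noncomputable def g4 : Matrix (Fin 5) (Fin 5) ℝ :=
  (1/2 : ℝ) • !![-3, -3, -1, 1, -4; 1, -1, -1, -1, 0; -3, -3, 1, -1, -4; -1, 1, -1, -1, 0; 4, 4, 0, 0, 6]

noncomputable def g6 : Matrix (Fin 5) (Fin 5) ℝ :=
  (1/2 : ℝ) • !![1, -1, 1, 1, 0; -1, -1, -1, 1, 0; 3, 1, -3, 1, 4; 3, -1, -3, -1, 4; 4, 0, -4, 0, 6]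

noncomputable def g7 : Matrix (Fin 5) (Fin 5) ℝ :=
  (1/2 : ℝ) • !![1, 1, 1, -1, 0; -1, 1, -1, -1, 0; -3, -1, 3, -1, 4; 3, -1, -3, -1, -4; -4, 0, 4, 0, 6]

noncomputable def g9 : Matrix (Fin 5) (Fin 5) ℝ :=
  (1/2 : ℝ) • !![-1, -1, 1, -1, 0; 1, 3, 3, -1, -4; -1, 1, -1, -1, 0; 1, -3, -3, -1, 4; 0, -4, -4, 0, 6]

noncomputable def g10 : Matrix (Fin 5) (Fin 5) ℝ :=
  (1/2 : ℝ) • !![1, -1, -1, -1, 0; 1, -3, 3, 1, -4; -1, -1, -1, 1, 0; -1, -3, 3, -1, -4; 0, 4, -4, 0, 6]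

noncomputable def g11 : Matrix (Fin 5) (Fin 5) ℝ :=
  (1/2 : ℝ) • !![-1, 1, 1, -1, 0; -1, -1, -1, -1, 0; 1, 3, -3, -1, -4; -1, 3, -3, 1, -4; 0, -4, 4, 0, 6]

noncomputable def g12 : Matrix (Fin 5) (Fin 5) ℝ :=
  !![0, 0, 0, 1, 0; 0, 2, 1, 0, 2; 1, 0, 0, 0, 0; 0, -1, -2, 0, -2; 0, 2, 2, 0, 3]

noncomputable def g14 : Matrix (Fin 5) (Fin 5) ℝ :=
  !![2, 0, 0, -1, 2; 0, 0, 1, 0, 0; 0, 1, 0, 0, 0; -1, 0, 0, 2, -2; 2, 0, 0, -2, 3]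

noncomputable def g17 : Matrix (Fin 5) (Fin 5) ℝ :=
  (1/2 : ℝ) • !![-1, 1, -1, -1, 0; 1, 1, 1, -1, 0; 1, 3, -1, 3, -4; 1, -3, -1, -3, 4; 0, -4, 0, -4, 6]

theorem stmt14 :
    g1.mulVec (s 0) = -s 4 ∧
    g2.mulVec (s 1) = -s 12 ∧
    g3.mulVec (s 2) = -s 15 ∧
    g4.mulVec (s 3) = -s 7 ∧
    g6.mulVec (s 5) = -s 20 ∧
    g7.mulVec (s 6) = -s 22 ∧
    g9.mulVec (s 8) = -s 17 ∧
    g10.mulVec (s 9) = -s 19 ∧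
    g11.mulVec (s 10) = -s 23 ∧
    g12.mulVec (s 11) = -s 18 ∧
    g14.mulVec (s 13) = -s 14 ∧
    g17.mulVec (s 16) = -s 21 := by
  refine ⟨?_, ?_, ?_, ?_, ?_, ?_, ?_, ?_, ?_, ?_, ?_, ?_⟩
  · show g1.mulVec ![1,1,0,0,1] = -![1,0,1,0,1]
    funext i
    fin_cases i <;>
      simp [g1, Matrix.mulVec, dotProduct, Fin.sum_univ_five] <;> norm_num
  · show g2.mulVec ![-1,1,0,0,1] = -![1,0,0,1,1]
    funext i
    fin_cases i <;>
      simp [g2, Matrix.mulVec, dotProduct, Fin.sum_univ_five] <;> norm_num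
  · show g3.mulVec ![1,-1,0,0,1] = -![-1,0,0,-1,1]
    funext i
    fin_cases i <;>
      simp [g3, Matrix.mulVec, dotProduct, Fin.sum_univ_five] <;> norm_num
  · show g4.mulVec ![-1,-1,0,0,1] = -![-1,0,-1,0,1]
    funext i
    fin_cases i <;>
      simp [g4, Matrix.mulVec, dotProduct, Fin.sum_univ_five] <;> norm_num
  · show g6.mulVec ![-1,0,1,0,1] = -![0,0,1,1,1]
    funext i
    fin_cases i <;>
      simp [g6, Matrix.mulVec, dotProduct, Fin.sum_univ_five] <;> norm_num
  · show g7.mulVec ![1,0,-1,0,1] = -![0,0,1,-1,1]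
    funext i
    fin_cases i <;>
      simp [g7, Matrix.mulVec, dotProduct, Fin.sum_univ_five] <;> norm_num
  · show g9.mulVec ![0,1,1,0,1] = -![0,-1,0,1,1]
    funext i
    fin_cases i <;>
      simp [g9, Matrix.mulVec, dotProduct, Fin.sum_univ_five] <;> norm_num
  · show g10.mulVec ![0,-1,1,0,1] = -![0,-1,0,-1,1]
    funext i
    fin_cases i <;>
      simp [g10, Matrix.mulVec, dotProduct, Fin.sum_univ_five] <;> norm_num
  · show g11.mulVec ![0,1,-1,0,1] = -![0,0,-1,-1,1]
    funext i
    fin_cases i <;>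
      simp [g11, Matrix.mulVec, dotProduct, Fin.sum_univ_five] <;> norm_num
  · show g12.mulVec ![0,-1,-1,0,1] = -![0,1,0,-1,1]
    funext i
    fin_cases i <;>
      simp [g12, Matrix.mulVec, dotProduct, Fin.sum_univ_five] <;> norm_num
  · show g14.mulVec ![-1,0,0,1,1] = -![1,0,0,-1,1]
    funext i
    fin_cases i <;>
      simp [g14, Matrix.mulVec, dotProduct, Fin.sum_univ_five] <;> norm_num
  · show g17.mulVec ![0,1,0,1,1] = -![0,0,-1,1,1]
    funext i
    fin_cases i <;>
      simp [g17, Matrix.mulVec, dotProduct, Fin.sum_univ_five] <;> norm_num
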